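/- Let n ≥ 1, let U ⊆ ℝ^d be open, let f_1, …, f_n : U → ℝ be functions differentiable at a point x ∈ U, and set g = (Σ_{k=1}^n f_k²)^{1/2}. If g(x) > 0, then g is differentiable at x and Σ_{k=1}^n ‖∇f_k(x)‖² − ‖∇g(x)‖² = g(x)^{-2} · Σ_{1 ≤ j < k ≤ n} ‖f_j(x)∇f_k(x) − f_k(x)∇f_j(x)‖². In particular ‖∇g(x)‖² ≤ Σ_{k=1}^n ‖∇f_k(x)‖², with equality if and only if f_j(x)∇f_k(x) − f_k(x)∇f_j(x) = 0 for all j ≠ k. -/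

import Mathlib

open Finset

private lemma sum_lt_pairs {n : ℕ} (T : Fin n → Fin n → ℝ) (hdiag : ∀ j, T j j = 0) :
    ∑ j, ∑ k, T j k = ∑ j, ∑ k, (if j < k then T j k + T k j else 0) := by
  have h1 : ∑ j, ∑ k, T j k
      = (∑ j, ∑ k, if j < k then T j k else 0) + ∑ j, ∑ k, (if k < j then T j k else 0) := by
    rw [← Finset.sum_add_distrib]
    refine Finset.sum_congr rfl fun j _ => ?_
    rw [← Finset.sum_add_distrib]
    refine Finset.sum_congr rfl fun k _ => ?_
    rcases lt_trichotomy j k with h | h | h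
    · simp [h, h.not_gt]
    · simp [h, hdiag]
    · simp [h, h.not_gt]
  have h2 : (∑ j, ∑ k, if k < j then T j k else 0) = ∑ j, ∑ k, (if j < k then T k j else 0) :=
    Finset.sum_comm
  rw [h1, h2, ← Finset.sum_add_distrib]
  refine Finset.sum_congr rfl fun j _ => ?_
  rw [← Finset.sum_add_distrib]
  refine Finset.sum_congr rfl fun k _ => ?_
  split_ifs <;> simp

private lemma lagrange {F : Type*} [NormedAddCommGroup F] [InnerProductSpace ℝ F] {n : ℕ}
    (a : Fin n → ℝ) (v : Fin n → F) :
    (∑ k, a k ^ 2) * (∑ k, ‖v k‖ ^ 2) - ‖∑ k, a k • v k‖ ^ 2 =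
      ∑ j, ∑ k, (if j < k then ‖a j • v k - a k • v j‖ ^ 2 else 0) := by
  have hnorm : ‖∑ k, a k • v k‖ ^ 2
      = ∑ j, ∑ k, a j * a k * inner ℝ (v j) (v k) := by
    rw [← real_inner_self_eq_norm_sq, sum_inner]
    refine Finset.sum_congr rfl fun j _ => ?_
    rw [inner_sum]
    refine Finset.sum_congr rfl fun k _ => ?_
    rw [real_inner_smul_left, real_inner_smul_right]; ring
  have key := sum_lt_pairs (fun j k => a j ^ 2 * ‖v k‖ ^ 2 - a j * a k * inner ℝ (v j) (v k))
    (fun j => by simp only [real_inner_self_eq_norm_sq]; ring)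
  have hterm : ∀ j k : Fin n,
      (a j ^ 2 * ‖v k‖ ^ 2 - a j * a k * inner ℝ (v j) (v k)) +
      (a k ^ 2 * ‖v j‖ ^ 2 - a k * a j * inner ℝ (v k) (v j)) =
      ‖a j • v k - a k • v j‖ ^ 2 := by
    intro j k
    rw [norm_sub_sq_real, real_inner_smul_left, real_inner_smul_right,
      norm_smul, norm_smul, mul_pow, mul_pow, Real.norm_eq_abs, Real.norm_eq_abs,
      sq_abs, sq_abs, real_inner_comm (v k) (v j)]
    ring
  calc (∑ k, a k ^ 2) * (∑ k, ‖v k‖ ^ 2) - ‖∑ k, a k • v k‖ ^ 2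
      = ∑ j, ∑ k, (a j ^ 2 * ‖v k‖ ^ 2 - a j * a k * inner ℝ (v j) (v k)) := by
        rw [Finset.sum_mul_sum, hnorm, ← Finset.sum_sub_distrib]
        exact Finset.sum_congr rfl fun j _ => by rw [← Finset.sum_sub_distrib]
    _ = ∑ j, ∑ k, (if j < k then ‖a j • v k - a k • v j‖ ^ 2 else 0) := by
        rw [key]
        refine Finset.sum_congr rfl fun j _ => Finset.sum_congr rfl fun k _ => ?_
        split_ifs with h
        · exact hterm j k
        · rfl

theorem gradient_sq_sum_redistribution_single {d n : ℕ} (hn : 1 ≤ n)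
    (U : Set (EuclideanSpace ℝ (Fin d))) (hU : IsOpen U)
    (f : Fin n → EuclideanSpace ℝ (Fin d) → ℝ)
    (x : EuclideanSpace ℝ (Fin d)) (hx : x ∈ U)
    (hdiff : ∀ k, DifferentiableAt ℝ (f k) x)
    (g : EuclideanSpace ℝ (Fin d) → ℝ)
    (hg : g = fun y => Real.sqrt (∑ k, (f k y) ^ 2))
    (hgx : 0 < g x) :
    DifferentiableAt ℝ g x ∧
    (∑ k, ‖gradient (f k) x‖ ^ 2) - ‖gradient g x‖ ^ 2 =
      ((g x) ^ 2)⁻¹ *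
        ∑ j, ∑ k, (if j < k then
          ‖f j x • gradient (f k) x - f k x • gradient (f j) x‖ ^ 2 else 0) ∧
    ‖gradient g x‖ ^ 2 ≤ ∑ k, ‖gradient (f k) x‖ ^ 2 ∧
    (‖gradient g x‖ ^ 2 = ∑ k, ‖gradient (f k) x‖ ^ 2 ↔
      ∀ j k, j ≠ k → f j x • gradient (f k) x - f k x • gradient (f j) x = 0) := by
  set a : Fin n → ℝ := fun k => f k x with ha
  set v : Fin n → EuclideanSpace ℝ (Fin d) := fun k => gradient (f k) x with hv
  set L : Fin n → EuclideanSpace ℝ (Fin d) →L[ℝ] ℝ := fun k => fderiv ℝ (f k) x with hL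
  set S : EuclideanSpace ℝ (Fin d) → ℝ := fun y => ∑ k, (f k y) ^ 2 with hSdef
  have hSnonneg : 0 ≤ S x := Finset.sum_nonneg fun k _ => sq_nonneg _
  have hgxS : g x = Real.sqrt (S x) := by rw [hg]
  have hSx : S x = g x ^ 2 := by
    rw [hgxS, Real.sq_sqrt hSnonneg]
  have hSxpos : 0 < S x := by rw [hSx]; exact pow_pos hgx 2
  have hgne : g x ≠ 0 := hgx.ne'
  -- derivative of S
  have hS : HasFDerivAt S (∑ k, (2 * a k) • L k) x := by
    apply HasFDerivAt.fun_sum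
    intro k _
    have h1 := ((hdiff k).hasFDerivAt).fun_mul ((hdiff k).hasFDerivAt)
    have h2 : (fun y => f k y ^ 2) = fun y => f k y * f k y := by
      funext y; ring
    rw [h2]
    have h3 : (2 * a k) • L k = f k x • fderiv ℝ (f k) x + f k x • fderiv ℝ (f k) x := by
      rw [two_mul, add_smul]
    rw [h3]; exact h1
  have hsqrt : HasDerivAt Real.sqrt (1 / (2 * Real.sqrt (S x))) (S x) :=
    Real.hasDerivAt_sqrt hSxpos.ne'
  have hgF : HasFDerivAt g ((1 / (2 * Real.sqrt (S x))) • ∑ k, (2 * a k) • L k) x := by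
    have hcomp := hsqrt.comp_hasFDerivAt x hS
    have hgeq : g = Real.sqrt ∘ S := by
      funext y; rw [hg]; rfl
    rw [hgeq]; exact hcomp
  have hdg : DifferentiableAt ℝ g x := hgF.differentiableAt
  -- compute the gradient of g
  have hgrad : gradient g x = (g x)⁻¹ • ∑ k, a k • v k := by
    show (InnerProductSpace.toDual ℝ _).symm (fderiv ℝ g x) = _
    rw [hgF.fderiv, map_smul, map_sum]
    have h0 : ∀ k, (InnerProductSpace.toDual ℝ (EuclideanSpace ℝ (Fin d))).symm
        ((2 * a k) • L k) = (2 * a k) • v k := fun k => by rw [map_smul]; rfl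
    simp_rw [h0]
    have h3 : ∑ k, (2 * a k) • v k = (2 : ℝ) • ∑ k, a k • v k := by
      rw [Finset.smul_sum]
      exact Finset.sum_congr rfl fun k _ => by rw [mul_smul]
    rw [h3, smul_smul, ← hgxS]
    congr 1
    field_simp
  have hnormgrad : ‖gradient g x‖ ^ 2 = ((g x) ^ 2)⁻¹ * ‖∑ k, a k • v k‖ ^ 2 := by
    rw [hgrad, norm_smul, mul_pow, Real.norm_eq_abs, sq_abs, inv_pow]
  have hc2 : ∑ k, a k ^ 2 = g x ^ 2 := hSx
  have key : (∑ k, ‖v k‖ ^ 2) - ‖gradient g x‖ ^ 2 =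
      ((g x) ^ 2)⁻¹ * ∑ j, ∑ k, (if j < k then ‖a j • v k - a k • v j‖ ^ 2 else 0) := by
    rw [hnormgrad, ← lagrange a v, hc2]
    field_simp
  have hRnonneg : 0 ≤ ∑ j, ∑ k, (if j < k then ‖a j • v k - a k • v j‖ ^ 2 else 0) :=
    Finset.sum_nonneg fun j _ => Finset.sum_nonneg fun k _ => by positivity
  refine ⟨hdg, key, ?_, ?_⟩
  · have h4 : 0 ≤ ((g x) ^ 2)⁻¹ *
        ∑ j, ∑ k, (if j < k then ‖a j • v k - a k • v j‖ ^ 2 else 0) :=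
      mul_nonneg (by positivity) hRnonneg
    linarith [key]
  · constructor
    · intro heq
      have h5 : ((g x) ^ 2)⁻¹ *
          ∑ j, ∑ k, (if j < k then ‖a j • v k - a k • v j‖ ^ 2 else 0) = 0 := by
        rw [← key]; linarith [heq]
      have hR0 : ∑ j, ∑ k, (if j < k then ‖a j • v k - a k • v j‖ ^ 2 else 0) = 0 :=
        (mul_eq_zero.1 h5).resolve_left (inv_ne_zero (pow_ne_zero 2 hgne))
      have hzero : ∀ j k : Fin n, j < k → a j • v k - a k • v j = 0 := by
        intro j k hjk
        have h1 := (Finset.sum_eq_zero_iff_of_nonneg fun j _ =>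
          Finset.sum_nonneg fun k _ => by positivity).1 hR0 j (Finset.mem_univ j)
        have h2 := (Finset.sum_eq_zero_iff_of_nonneg fun k _ => by positivity).1 h1 k
          (Finset.mem_univ k)
        rw [if_pos hjk] at h2
        exact norm_eq_zero.1 (pow_eq_zero_iff (two_ne_zero) |>.1 h2)
      intro j k hjk
      rcases lt_or_gt_of_ne hjk with h | h
      · exact hzero j k h
      · have h6 := hzero k j h
        have h7 : a j • v k - a k • v j = -(a k • v j - a j • v k) := by abel
        rw [h7, h6, neg_zero]
    · intro hall
      have hR0 : ∑ j, ∑ k, (if j < k then ‖a j • v k - a k • v j‖ ^ 2 else 0) = 0 := by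
        refine Finset.sum_eq_zero fun j _ => Finset.sum_eq_zero fun k _ => ?_
        split_ifs with h
        · rw [hall j k h.ne, norm_zero]; norm_num
        · rfl
      have h := key
      rw [hR0, mul_zero, sub_eq_zero] at h
      exact h.symm
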